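/- For all nonnegative integers i and k with k ≥ i, the sum over j from 0 to i of C(i,j)/C(k,j) equals (k+1)/(k+1-i). -/

import Mathlib

theorem stmt_0 (i k : ℕ) (h : i ≤ k) :
    ∑ j ∈ Finset.range (i + 1), (i.choose j : ℚ) / (k.choose j : ℚ)
      = ((k : ℚ) + 1) / ((k : ℚ) + 1 - (i : ℚ)) := by
  have hCk : (0:ℚ) < (k.choose i : ℚ) := by exact_mod_cast Nat.choose_pos h
  have key : ∀ j ∈ Finset.range (i + 1),
      (i.choose j : ℚ) / (k.choose j : ℚ) = ((k - j).choose (k - i) : ℚ) / (k.choose i : ℚ) := by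
    intro j hj
    rw [Finset.mem_range] at hj
    have hji : j ≤ i := by omega
    have h1 : k.choose i * i.choose j = k.choose j * (k - j).choose (i - j) :=
      Nat.choose_mul hji
    have h2 : (k - j).choose (i - j) = (k - j).choose (k - i) := by
      rw [← Nat.choose_symm (by omega : i - j ≤ k - j)]
      congr 1; omega
    have hCkj : (0:ℚ) < (k.choose j : ℚ) := by
      exact_mod_cast Nat.choose_pos (le_trans hji h)
    rw [div_eq_div_iff hCkj.ne' hCk.ne']
    rw [h2] at h1
    have h3 : i.choose j * k.choose i = (k - j).choose (k - i) * k.choose j := by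
      rw [mul_comm, h1, mul_comm]
    exact_mod_cast h3
  rw [Finset.sum_congr rfl key, ← Finset.sum_div]
  have hsum : ∑ j ∈ Finset.range (i + 1), ((k - j).choose (k - i) : ℚ)
      = ((k + 1).choose (k - i + 1) : ℚ) := by
    have := Finset.sum_range_reflect (fun j => ((k - j).choose (k - i) : ℚ)) (i + 1)
    rw [← this]
    have : ∀ j ∈ Finset.range (i + 1),
        ((k - (i + 1 - 1 - j)).choose (k - i) : ℚ) = ((j + (k - i)).choose (k - i) : ℚ) := by
      intro j hj
      rw [Finset.mem_range] at hj
      congr 2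
      omega
    rw [Finset.sum_congr rfl this]
    exact_mod_cast congrArg (Nat.cast : ℕ → ℚ)
      ((Nat.sum_range_add_choose i (k - i)).trans (by congr 1; omega))
  rw [hsum]
  have hsymm : (k + 1).choose (k - i + 1) = (k + 1).choose i := by
    rw [← Nat.choose_symm (by omega : i ≤ k + 1)]
    congr 1; omega
  have hmul : k.choose i * (k + 1) = (k + 1).choose i * (k + 1 - i) :=
    Nat.choose_mul_succ_eq k i
  have hki : ((k:ℚ) + 1 - i) ≠ 0 := by
    have : (i:ℚ) ≤ k := by exact_mod_cast h
    nlinarith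
  rw [hsymm, div_eq_div_iff hCk.ne' hki]
  have hc : ((k + 1 - i : ℕ) : ℚ) = (k:ℚ) + 1 - i := by
    have hik : i ≤ k + 1 := by omega
    push_cast [hik]; ring
  rw [← hc]
  exact_mod_cast hmul.symm.trans (mul_comm _ _)
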